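/- Let λ ∈ (1, 2), P = (λ/2)·[[1, −1], [−1, 1]] ∈ ℝ^{2×2}, 𝓜 = {(x, y)^⊤ ∈ ℝ² : x = y}, and W = 1. Define f: ℝ² → ℝ² by f(X) := σ(P X W), where σ is the entrywise ReLU. Then Wλ > 1, and d_𝓜(f(X)) = (λ/2)·d_𝓜(X) for every X ∈ ℝ²; in particular d_𝓜(f(X)) < d_𝓜(X) for every X ∉ 𝓜. -/
import Mathlib


open scoped Matrix

noncomputable section

lemma infDist_diag_aux (v : EuclideanSpace ℝ (Fin 2)) :
    Metric.infDist v {w : EuclideanSpace ℝ (Fin 2) | w 0 = w 1} = |v 0 - v 1| / Real.sqrt 2 := by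
  have hne : ({w : EuclideanSpace ℝ (Fin 2) | w 0 = w 1}).Nonempty := ⟨0, by simp⟩
  have h2 : (0:ℝ) < Real.sqrt 2 := Real.sqrt_pos.mpr (by norm_num)
  apply le_antisymm
  · set m : ℝ := (v 0 + v 1) / 2 with hm
    set p : EuclideanSpace ℝ (Fin 2) := (WithLp.equiv 2 _).symm ![m, m] with hp
    have hpmem : p ∈ {w : EuclideanSpace ℝ (Fin 2) | w 0 = w 1} := rfl
    refine le_trans (Metric.infDist_le_dist_of_mem hpmem) ?_
    rw [EuclideanSpace.dist_eq]
    have hp0 : p 0 = m := rfl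
    have hp1 : p 1 = m := rfl
    rw [Fin.sum_univ_two, hp0, hp1]
    have heq : dist (v 0) m ^ 2 + dist (v 1) m ^ 2 = (v 0 - v 1)^2 / 2 := by
      rw [Real.dist_eq, Real.dist_eq, sq_abs, sq_abs, hm]; ring
    rw [heq, Real.sqrt_div (sq_nonneg _), Real.sqrt_sq_eq_abs]
  · by_contra hcon
    rw [not_le, Metric.infDist_lt_iff hne] at hcon
    obtain ⟨w, hw, hlt⟩ := hcon
    rw [EuclideanSpace.dist_eq, Fin.sum_univ_two] at hlt
    have hwe : w 0 = w 1 := hw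
    have hb : |v 0 - v 1| / Real.sqrt 2 ≤
        Real.sqrt (dist (v 0) (w 0) ^ 2 + dist (v 1) (w 1) ^ 2) := by
      rw [div_le_iff₀ h2, ← Real.sqrt_mul (by positivity) 2, ← Real.sqrt_sq_eq_abs]
      apply Real.sqrt_le_sqrt
      rw [Real.dist_eq, Real.dist_eq, ← hwe, sq_abs, sq_abs]
      nlinarith [sq_nonneg (v 0 + v 1 - 2 * w 0)]
    exact absurd hlt (not_lt.mpr hb)

theorem relu_layer_contracts_distance (lam : ℝ) (hlam1 : 1 < lam) (hlam2 : lam < 2)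
    (W : ℝ) (hW : W = 1)
    (Msp : Set (EuclideanSpace ℝ (Fin 2))) (hMsp : Msp = {v | v 0 = v 1})
    (f : EuclideanSpace ℝ (Fin 2) → EuclideanSpace ℝ (Fin 2))
    (hf : ∀ (X : EuclideanSpace ℝ (Fin 2)) (i : Fin 2),
      f X i = max (((lam / 2) • Matrix.of ![![(1 : ℝ), -1], ![-1, 1]]).mulVec X i * W) 0) :
    W * lam > 1 ∧
    (∀ X : EuclideanSpace ℝ (Fin 2),
      Metric.infDist (f X) Msp = (lam / 2) * Metric.infDist X Msp) ∧
    (∀ X : EuclideanSpace ℝ (Fin 2), X ∉ Msp →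
      Metric.infDist (f X) Msp < Metric.infDist X Msp) := by
  subst hW hMsp
  have hlpos : 0 < lam / 2 := by linarith
  have key : ∀ X : EuclideanSpace ℝ (Fin 2),
      Metric.infDist (f X) {v : EuclideanSpace ℝ (Fin 2) | v 0 = v 1}
        = (lam / 2) * Metric.infDist X {v : EuclideanSpace ℝ (Fin 2) | v 0 = v 1} := by
    intro X
    rw [infDist_diag_aux, infDist_diag_aux]
    have h0 : f X 0 = max (lam / 2 * (X 0 - X 1)) 0 := by
      rw [hf X 0]
      simp [Matrix.mulVec, dotProduct, Fin.sum_univ_two]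
      ring_nf
    have h1 : f X 1 = max (-(lam / 2 * (X 0 - X 1))) 0 := by
      rw [hf X 1]
      simp [Matrix.mulVec, dotProduct, Fin.sum_univ_two]
      ring_nf
    have hdiff : f X 0 - f X 1 = lam / 2 * (X 0 - X 1) := by
      rw [h0, h1]
      rcases le_total (lam / 2 * (X 0 - X 1)) 0 with h | h
      · rw [max_eq_right h, max_eq_left (by linarith)]; ring
      · rw [max_eq_left h, max_eq_right (by linarith)]; ring
    rw [hdiff, abs_mul, abs_of_pos hlpos, mul_div_assoc]
  refine ⟨by linarith, key, ?_⟩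
  intro X hX
  rw [key X]
  have hpos : 0 < Metric.infDist X {v : EuclideanSpace ℝ (Fin 2) | v 0 = v 1} := by
    rw [infDist_diag_aux]
    have : X 0 ≠ X 1 := hX
    have : |X 0 - X 1| > 0 := abs_pos.mpr (sub_ne_zero.mpr this)
    positivity
  nlinarith
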